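/- Let 0 < φ_1 ≤ ⋯ ≤ φ_m, integers k_a, k_d ≥ 1 with k_a + k_d ≤ m. Then max over α ∈ [0,1]^m with Σα = k_a of [min over (m−k_d)-subsets T of Σ_{l∈T} α_l φ_l] equals min over β ∈ [0,1]^m with Σβ = m − k_d of [max over k_a-subsets S of Σ_{l∈S} β_l φ_l]. -/

import Mathlib

open Finset

/-- Auxiliary: existence of a "top-k" subset for a real-valued function. -/
lemma stmt19_exists_topk {ι : Type*} [DecidableEq ι] (a : ι → ℝ) (s : Finset ι) :
    ∀ k, k ≤ s.card →
      ∃ S, S ⊆ s ∧ S.card = k ∧ ∀ i ∈ S, ∀ j ∈ s, j ∉ S → a j ≤ a i := by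
  intro k
  induction k with
  | zero => intro _; exact ⟨∅, by simp, by simp, by simp⟩
  | succ k ih =>
    intro hk
    obtain ⟨S, hSs, hScard, hStop⟩ := ih (Nat.le_of_succ_le hk)
    have hne : (s \ S).Nonempty := by
      rw [← Finset.card_pos, Finset.card_sdiff_of_subset hSs]
      omega
    obtain ⟨j₀, hj₀, hj₀max⟩ := Finset.exists_max_image (s \ S) a hne
    have hj₀s : j₀ ∈ s := (Finset.mem_sdiff.1 hj₀).1
    have hj₀S : j₀ ∉ S := (Finset.mem_sdiff.1 hj₀).2
    refine ⟨insert j₀ S, Finset.insert_subset hj₀s hSs, ?_, ?_⟩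
    · rw [Finset.card_insert_of_notMem hj₀S, hScard]
    · intro i hi j hj hjS
      have hjS' : j ∉ S := fun h => hjS (Finset.mem_insert_of_mem h)
      rcases Finset.mem_insert.1 hi with rfl | hiS
      · exact hj₀max j (Finset.mem_sdiff.2 ⟨hj, hjS'⟩)
      · exact hStop i hiS j hj hjS'

/-- Auxiliary: a `[0,1]`-weighted sum with total weight `k` is at most the best `k`-subset sum. -/
lemma stmt19_weight_le_sup {m k : ℕ} (hk1 : 1 ≤ k) (hkm : k ≤ m) (a w : Fin m → ℝ)
    (hw : ∀ i, 0 ≤ w i ∧ w i ≤ 1) (hws : ∑ i, w i = (k : ℝ))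
    (hne : ((Finset.univ : Finset (Fin m)).powersetCard k).Nonempty) :
    ∑ i, w i * a i ≤ (Finset.univ.powersetCard k).sup' hne (fun S => ∑ l ∈ S, a l) := by
  obtain ⟨S, -, hScard, hStop⟩ := stmt19_exists_topk a Finset.univ k (by simpa using hkm)
  have hSmem : S ∈ (Finset.univ : Finset (Fin m)).powersetCard k :=
    Finset.mem_powersetCard_univ.2 hScard
  have hSne : S.Nonempty := Finset.card_pos.1 (by omega)
  set t : ℝ := S.inf' hSne a with ht
  have h1 : ∀ i, w i * a i ≤ (if i ∈ S then a i - t else 0) + w i * t := by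
    intro i
    rcases (hw i) with ⟨h0, h1⟩
    by_cases hiS : i ∈ S
    · simp only [hiS, if_pos]
      have hti : t ≤ a i := Finset.inf'_le a hiS
      nlinarith
    · simp only [hiS, if_neg, not_false_iff]
      obtain ⟨i₀, hi₀S, hi₀⟩ := Finset.exists_mem_eq_inf' hSne a
      have : a i ≤ t := by
        rw [ht, hi₀]
        exact hStop i₀ hi₀S i (Finset.mem_univ i) hiS
      nlinarith
  calc ∑ i, w i * a i ≤ ∑ i, ((if i ∈ S then a i - t else 0) + w i * t) :=
        Finset.sum_le_sum (fun i _ => h1 i)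
    _ = (∑ l ∈ S, (a l - t)) + (∑ i, w i) * t := by
        rw [Finset.sum_add_distrib, Finset.sum_ite_mem, Finset.univ_inter, ← Finset.sum_mul]
    _ = ∑ l ∈ S, a l := by
        rw [hws, Finset.sum_sub_distrib]
        have : ∑ _l ∈ S, t = (k : ℝ) * t := by
          rw [Finset.sum_const, hScard, nsmul_eq_mul]
        rw [this]; ring
    _ ≤ _ := Finset.le_sup' (fun S => ∑ l ∈ S, a l) hSmem

/-- Auxiliary: dual version, the worst `k`-subset sum is at most a `[0,1]`-weighted sum with
total weight `k`. -/
lemma stmt19_inf_le_weight {m k : ℕ} (hk1 : 1 ≤ k) (hkm : k ≤ m) (a w : Fin m → ℝ)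
    (hw : ∀ i, 0 ≤ w i ∧ w i ≤ 1) (hws : ∑ i, w i = (k : ℝ))
    (hne : ((Finset.univ : Finset (Fin m)).powersetCard k).Nonempty) :
    (Finset.univ.powersetCard k).inf' hne (fun T => ∑ l ∈ T, a l) ≤ ∑ i, w i * a i := by
  have H := stmt19_weight_le_sup hk1 hkm (fun i => -a i) w hw hws hne
  obtain ⟨S₀, hS₀mem, hS₀⟩ := Finset.exists_mem_eq_sup' hne (fun S => ∑ l ∈ S, -a l)
  rw [hS₀] at H
  have h2 : ∑ l ∈ S₀, a l ≤ ∑ i, w i * a i := by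
    have h3 : ∑ i, w i * -a i = -∑ i, w i * a i := by
      rw [← Finset.sum_neg_distrib]; congr 1; funext i; ring
    have h4 : ∑ l ∈ S₀, -a l = -∑ l ∈ S₀, a l := by
      rw [← Finset.sum_neg_distrib]
    rw [h3, h4] at H
    linarith
  exact le_trans (Finset.inf'_le (fun T => ∑ l ∈ T, a l) hS₀mem) h2

/-- Auxiliary: theorem of the alternative / minimax core, proved by separating the convex hull of
the columns from the nonpositive orthant. -/
lemma stmt19_alt {I J : Type*} [Fintype I] [DecidableEq I] [Fintype J] [Nonempty J]
    (B : I → J → ℝ)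
    (h : ∀ y : J → ℝ, (∀ j, 0 ≤ y j) → ∑ j, y j = 1 → ∃ i, 0 < ∑ j, y j * B i j) :
    ∃ x : I → ℝ, (∀ i, 0 ≤ x i) ∧ (∑ i, x i = 1) ∧ ∀ j, 0 ≤ ∑ i, x i * B i j := by
  classical
  set Φ : (J → ℝ) → (I → ℝ) := fun y i => ∑ j, y j * B i j with hΦ
  set C : Set (I → ℝ) := Φ '' stdSimplex ℝ J with hC
  set O : Set (I → ℝ) := {u | ∀ i, u i ≤ 0} with hO
  have hΦlin : IsLinearMap ℝ Φ := by
    constructor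
    · intro y z; funext i; simp [Φ, add_mul, Finset.sum_add_distrib]
    · intro c y; funext i; simp [Φ, Finset.mul_sum, mul_assoc]
  have hΦcont : Continuous Φ := by
    apply continuous_pi
    intro i
    exact continuous_finset_sum _ (fun j _ => (continuous_apply j).mul continuous_const)
  have hCconv : Convex ℝ C := (convex_stdSimplex ℝ J).is_linear_image hΦlin
  have hCcomp : IsCompact C := (isCompact_stdSimplex ℝ J).image hΦcont
  have hOconv : Convex ℝ O := by
    intro u hu v hv s t hs ht hst i
    have h1 : s * u i ≤ 0 := mul_nonpos_of_nonneg_of_nonpos hs (hu i)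
    have h2 : t * v i ≤ 0 := mul_nonpos_of_nonneg_of_nonpos ht (hv i)
    simp only [Pi.add_apply, Pi.smul_apply, smul_eq_mul]
    linarith
  have hOclosed : IsClosed O := by
    have : O = ⋂ i, {u : I → ℝ | u i ≤ 0} := by
      ext u; simp [hO, Set.mem_iInter]
    rw [this]
    exact isClosed_iInter (fun i => isClosed_le (continuous_apply i) continuous_const)
  have hdisj : Disjoint O C := by
    rw [Set.disjoint_right]
    rintro u ⟨y, hy, rfl⟩ hu
    obtain ⟨i, hi⟩ := h y hy.1 hy.2
    exact absurd (hu i) (not_le.2 hi)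
  obtain ⟨f, u, v, hfO, huv, hfC⟩ :=
    geometric_hahn_banach_closed_compact hOconv hOclosed hCconv hCcomp hdisj
  set x : I → ℝ := fun i => f (Pi.single i 1) with hx
  have hfeval : ∀ z : I → ℝ, f z = ∑ i, z i * x i := by
    intro z
    have hz : z = ∑ i, z i • (Pi.single i 1 : I → ℝ) := by
      funext j
      simp [Pi.single_apply, Finset.sum_apply, mul_ite, Finset.sum_ite_eq']
    conv_lhs => rw [hz]
    rw [map_sum]
    simp [hx, smul_eq_mul]
  have hu0 : 0 < u := by
    have : f 0 < u := hfO 0 (fun i => le_refl 0)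
    simpa using this
  have hxnn : ∀ i, 0 ≤ x i := by
    intro i
    by_contra hneg
    push_neg at hneg
    set lam : ℝ := (|u| + 1) / (-x i) with hlam
    have hlampos : 0 < lam := div_pos (by positivity) (by linarith)
    have hmem : (-lam) • (Pi.single i 1 : I → ℝ) ∈ O := by
      intro i'
      simp only [Pi.smul_apply, smul_eq_mul]
      rcases eq_or_ne i i' with rfl | hne
      · simp; linarith
      · simp [Pi.single_apply, hne.symm]
    have hfx : f (Pi.single i 1) = x i := rfl
    have hne0 : -x i ≠ 0 := ne_of_gt (by linarith)
    have heq : -lam * x i = |u| + 1 := by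
      rw [hlam, div_neg, neg_neg, div_mul_cancel₀ _ hneg.ne]
    have h2 := hfO _ hmem
    rw [map_smul, smul_eq_mul, hfx, heq] at h2
    have : u ≤ |u| := le_abs_self u
    linarith
  have hxsum : 0 < ∑ i, x i := by
    by_contra hle
    push_neg at hle
    have hzero : ∀ i, x i = 0 := by
      intro i
      have h1 : ∑ i, x i = 0 := le_antisymm hle (Finset.sum_nonneg (fun i _ => hxnn i))
      exact (Finset.sum_eq_zero_iff_of_nonneg (fun i _ => hxnn i)).1 h1 i (Finset.mem_univ i)
    obtain ⟨j⟩ := ‹Nonempty J›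
    have hcol : Φ (fun j' => if j' = j then 1 else 0) ∈ C :=
      ⟨_, ⟨fun j' => by positivity, by simp⟩, rfl⟩
    have := hfC _ hcol
    rw [hfeval] at this
    simp [hzero] at this
    linarith
  refine ⟨fun i => x i / ∑ i', x i', fun i => div_nonneg (hxnn i) hxsum.le, ?_, ?_⟩
  · rw [← Finset.sum_div]; field_simp
  · intro j
    have hcol : Φ (fun j' => if j' = j then 1 else 0) ∈ C :=
      ⟨_, ⟨fun j' => by positivity, by simp⟩, rfl⟩
    have hfc := hfC _ hcol
    rw [hfeval] at hfc
    have hΦval : ∀ i, Φ (fun j' => if j' = j then 1 else 0) i = B i j := by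
      intro i; simp [Φ, ite_mul, Finset.sum_ite_eq']
    have h1 : 0 ≤ ∑ i, B i j * x i := by
      have h2 : (0:ℝ) < ∑ i, Φ (fun j' => if j' = j then 1 else 0) i * x i := by linarith
      calc (0:ℝ) ≤ ∑ i, Φ (fun j' => if j' = j then 1 else 0) i * x i := h2.le
        _ = ∑ i, B i j * x i := by simp_rw [hΦval]
    have heq : ∑ i, x i / (∑ i', x i') * B i j = (∑ i, B i j * x i) / ∑ i', x i' := by
      rw [Finset.sum_div]
      congr 1; funext i; ring
    rw [heq]
    positivity

/-- Auxiliary: properties of the marginal of a mixed strategy over `k`-subsets. -/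
lemma stmt19_marginal_props {m k : ℕ}
    (x : {S // S ∈ (Finset.univ : Finset (Fin m)).powersetCard k} → ℝ)
    (hx0 : ∀ S, 0 ≤ x S) (hx1 : ∑ S, x S = 1) (φ : Fin m → ℝ) :
    (∀ l, 0 ≤ ∑ S, x S * (if l ∈ S.val then (1:ℝ) else 0)
        ∧ ∑ S, x S * (if l ∈ S.val then (1:ℝ) else 0) ≤ 1)
    ∧ (∑ l, ∑ S, x S * (if l ∈ S.val then (1:ℝ) else 0)) = (k : ℝ)
    ∧ ∀ T : Finset (Fin m),
        ∑ l ∈ T, (∑ S, x S * (if l ∈ S.val then (1:ℝ) else 0)) * φ l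
          = ∑ S, x S * (∑ l ∈ S.val ∩ T, φ l) := by
  classical
  have hcard : ∀ S : {S // S ∈ (Finset.univ : Finset (Fin m)).powersetCard k}, S.val.card = k :=
    fun S => Finset.mem_powersetCard_univ.1 S.property
  refine ⟨?_, ?_, ?_⟩
  · intro l
    constructor
    · apply Finset.sum_nonneg
      intro S _
      have := hx0 S
      positivity
    · calc ∑ S, x S * (if l ∈ S.val then (1:ℝ) else 0) ≤ ∑ S, x S := by
            apply Finset.sum_le_sum
            intro S _
            by_cases h : l ∈ S.val <;> simp [h, hx0 S]
      _ = 1 := hx1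
  · rw [Finset.sum_comm]
    have h : ∀ S : {S // S ∈ (Finset.univ : Finset (Fin m)).powersetCard k},
        ∑ l, x S * (if l ∈ S.val then (1:ℝ) else 0) = x S * k := by
      intro S
      rw [← Finset.mul_sum]
      congr 1
      rw [Finset.sum_ite_mem, Finset.univ_inter, Finset.sum_const, hcard S]
      simp
    simp_rw [h, ← Finset.sum_mul, hx1, one_mul]
  · intro T
    have h : ∀ l ∈ T, (∑ S, x S * (if l ∈ S.val then (1:ℝ) else 0)) * φ l
        = ∑ S, x S * (if l ∈ S.val then φ l else 0) := by
      intro l _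
      rw [Finset.sum_mul]
      congr 1; funext S
      by_cases h : l ∈ S.val <;> simp [h]
    rw [Finset.sum_congr rfl h, Finset.sum_comm]
    congr 1; funext S
    rw [← Finset.mul_sum]
    congr 1
    rw [Finset.sum_ite_mem, Finset.inter_comm]

/-- Minimax equality for the marginal security game with `k_a + k_d ≤ m`:
`max_{α ∈ [0,1]^m, Σα = k_a} min_{|T| = m−k_d} Σ_{l∈T} α_l φ_l
  = min_{β ∈ [0,1]^m, Σβ = m−k_d} max_{|S| = k_a} Σ_{l∈S} β_l φ_l`. -/
theorem stmt_19 (m ka kd : ℕ) (hka : 1 ≤ ka) (hkd : 1 ≤ kd) (hsum : ka + kd ≤ m)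
    (φ : Fin m → ℝ) (hφpos : ∀ i, 0 < φ i) (hφmono : Monotone φ)
    (hneT : ((Finset.univ : Finset (Fin m)).powersetCard (m - kd)).Nonempty)
    (hneS : ((Finset.univ : Finset (Fin m)).powersetCard ka).Nonempty) :
    sSup {v : ℝ | ∃ α : Fin m → ℝ, (∀ i, 0 ≤ α i ∧ α i ≤ 1) ∧ (∑ i, α i = (ka : ℝ)) ∧
        v = (Finset.univ.powersetCard (m - kd)).inf' hneT (fun T => ∑ l ∈ T, α l * φ l)}
      = sInf {v : ℝ | ∃ β : Fin m → ℝ, (∀ i, 0 ≤ β i ∧ β i ≤ 1) ∧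
          (∑ i, β i = (m : ℝ) - kd) ∧
          v = (Finset.univ.powersetCard ka).sup' hneS (fun S => ∑ l ∈ S, β l * φ l)} := by
  classical
  have hkam : ka ≤ m := by omega
  have hkdm : kd ≤ m := by omega
  have hm0 : 0 < m := by omega
  have hmk1 : 1 ≤ m - kd := by omega
  have hmkm : m - kd ≤ m := by omega
  have hcast : ((m - kd : ℕ) : ℝ) = (m : ℝ) - kd := by
    push_cast [Nat.cast_sub hkdm]; ring
  set A : Set ℝ := {v : ℝ | ∃ α : Fin m → ℝ, (∀ i, 0 ≤ α i ∧ α i ≤ 1) ∧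
      (∑ i, α i = (ka : ℝ)) ∧
      v = (Finset.univ.powersetCard (m - kd)).inf' hneT (fun T => ∑ l ∈ T, α l * φ l)} with hA
  set B : Set ℝ := {v : ℝ | ∃ β : Fin m → ℝ, (∀ i, 0 ≤ β i ∧ β i ≤ 1) ∧
      (∑ i, β i = (m : ℝ) - kd) ∧
      v = (Finset.univ.powersetCard ka).sup' hneS (fun S => ∑ l ∈ S, β l * φ l)} with hB
  -- weak duality: every element of A is at most every element of B
  have hle : ∀ a ∈ A, ∀ b ∈ B, a ≤ b := by
    rintro a ⟨α, hα, hαs, rfl⟩ b ⟨β, hβ, hβs, rfl⟩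
    have hβs' : ∑ i, β i = ((m - kd : ℕ) : ℝ) := by rw [hcast]; exact hβs
    have step1 := stmt19_inf_le_weight hmk1 hmkm (fun l => α l * φ l) β hβ hβs' hneT
    have step2 := stmt19_weight_le_sup hka hkam (fun l => β l * φ l) α hα hαs hneS
    have hmid : ∑ i, β i * (α i * φ i) = ∑ i, α i * (β i * φ i) := by
      congr 1; funext i; ring
    calc (Finset.univ.powersetCard (m - kd)).inf' hneT (fun T => ∑ l ∈ T, α l * φ l)
        ≤ ∑ i, β i * (α i * φ i) := step1
      _ = ∑ i, α i * (β i * φ i) := hmid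
      _ ≤ (Finset.univ.powersetCard ka).sup' hneS (fun S => ∑ l ∈ S, β l * φ l) := step2
  -- nonemptiness
  have hAne : A.Nonempty := by
    refine ⟨_, (fun _ => (ka : ℝ) / m), fun i => ⟨by positivity, ?_⟩, ?_, rfl⟩
    · rw [div_le_one (by exact_mod_cast hm0)]
      exact_mod_cast hkam
    · rw [Finset.sum_const, Finset.card_univ, Fintype.card_fin, nsmul_eq_mul]
      field_simp
  have hBne : B.Nonempty := by
    refine ⟨_, (fun _ => ((m : ℝ) - kd) / m), fun i => ⟨?_, ?_⟩, ?_, rfl⟩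
    · apply div_nonneg _ (by positivity)
      have : (kd : ℝ) ≤ m := by exact_mod_cast hkdm
      linarith
    · rw [div_le_one (by exact_mod_cast hm0)]
      have : (0:ℝ) ≤ kd := by positivity
      linarith
    · rw [Finset.sum_const, Finset.card_univ, Fintype.card_fin, nsmul_eq_mul]
      field_simp
  obtain ⟨a₀, ha₀⟩ := hAne
  obtain ⟨b₀, hb₀⟩ := hBne
  have hAbdd : BddAbove A := ⟨b₀, fun a ha => hle a ha b₀ hb₀⟩
  have hBbdd : BddBelow B := ⟨a₀, fun b hb => hle a₀ ha₀ b hb⟩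
  refine le_antisymm (csSup_le ⟨a₀, ha₀⟩ (fun a ha => le_csInf ⟨b₀, hb₀⟩ (fun b hb => hle a ha b hb))) ?_
  -- strong direction: sInf B ≤ sSup A
  by_contra hlt
  push_neg at hlt
  obtain ⟨t, ht1, ht2⟩ := exists_between hlt
  -- pure strategy types
  haveI hJne : Nonempty {T // T ∈ (Finset.univ : Finset (Fin m)).powersetCard (m - kd)} :=
    ⟨⟨hneT.choose, hneT.choose_spec⟩⟩
  set Bmat : {S // S ∈ (Finset.univ : Finset (Fin m)).powersetCard ka} →
      {T // T ∈ (Finset.univ : Finset (Fin m)).powersetCard (m - kd)} → ℝ :=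
    fun S T => (∑ l ∈ S.val ∩ T.val, φ l) - t with hBmat
  have halt : ∀ y : {T // T ∈ (Finset.univ : Finset (Fin m)).powersetCard (m - kd)} → ℝ,
      (∀ j, 0 ≤ y j) → ∑ j, y j = 1 → ∃ i, 0 < ∑ j, y j * Bmat i j := by
    intro y hy0 hy1
    obtain ⟨hβbd, hβsum, hβeval⟩ := stmt19_marginal_props y hy0 hy1 φ
    set β : Fin m → ℝ := fun l => ∑ T, y T * (if l ∈ T.val then (1:ℝ) else 0) with hβ
    have hβmem : ((Finset.univ.powersetCard ka).sup' hneS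
        (fun S => ∑ l ∈ S, β l * φ l)) ∈ B := by
      refine ⟨β, hβbd, ?_, rfl⟩
      rw [← hcast]; exact hβsum
    have hbig : t < (Finset.univ.powersetCard ka).sup' hneS (fun S => ∑ l ∈ S, β l * φ l) :=
      lt_of_lt_of_le ht2 (csInf_le hBbdd hβmem)
    obtain ⟨S₀, hS₀mem, hS₀⟩ :=
      Finset.exists_mem_eq_sup' hneS (fun S => ∑ l ∈ S, β l * φ l)
    refine ⟨⟨S₀, hS₀mem⟩, ?_⟩
    have hkey : ∑ j, y j * Bmat ⟨S₀, hS₀mem⟩ j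
        = (∑ l ∈ S₀, β l * φ l) - t := by
      have e1 : ∑ j, y j * Bmat ⟨S₀, hS₀mem⟩ j
          = (∑ j, y j * (∑ l ∈ S₀ ∩ j.val, φ l)) - (∑ j, y j) * t := by
        simp only [hBmat]
        rw [Finset.sum_mul, ← Finset.sum_sub_distrib]
        exact Finset.sum_congr rfl (fun j _ => by ring)
      rw [e1, hy1, one_mul]
      congr 1
      rw [hβeval S₀]
      congr 1; funext T
      rw [Finset.inter_comm]
    rw [hkey]
    rw [hS₀] at hbig
    linarith
  obtain ⟨x, hx0, hx1, hxB⟩ := stmt19_alt Bmat halt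
  obtain ⟨hαbd, hαsum, hαeval⟩ := stmt19_marginal_props x hx0 hx1 φ
  set α : Fin m → ℝ := fun l => ∑ S, x S * (if l ∈ S.val then (1:ℝ) else 0) with hα
  have hAmem : ((Finset.univ.powersetCard (m - kd)).inf' hneT
      (fun T => ∑ l ∈ T, α l * φ l)) ∈ A := ⟨α, hαbd, hαsum, rfl⟩
  have hge : t ≤ (Finset.univ.powersetCard (m - kd)).inf' hneT
      (fun T => ∑ l ∈ T, α l * φ l) := by
    apply Finset.le_inf'
    intro T hT
    have hBx := hxB ⟨T, hT⟩
    have e1 : ∑ S, x S * Bmat S ⟨T, hT⟩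
        = (∑ l ∈ T, α l * φ l) - t := by
      have e2 : ∑ S, x S * Bmat S ⟨T, hT⟩
          = (∑ S, x S * (∑ l ∈ S.val ∩ T, φ l)) - (∑ S, x S) * t := by
        simp only [hBmat]
        rw [Finset.sum_mul, ← Finset.sum_sub_distrib]
        exact Finset.sum_congr rfl (fun S _ => by ring)
      rw [e2, hx1, one_mul, hαeval T]
    rw [e1] at hBx
    linarith
  have := le_csSup hAbdd hAmem
  linarith
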